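/- Let N be a nonzero linear subspace of ℝ^{n+1}, let {v_1, …, v_m} be an orthonormal basis of the orthogonal complement N^⊥, and let x be a unit vector in ℝ^{n+1}. If S_N := S^n ∩ N is nonempty (equivalently N ≠ {0}), then the geodesic distance from x to S_N equals arcsin(√(Σ_{i=1}^m (x·v_i)^2)); that is, inf_{y ∈ S_N} arccos(x·y) = arcsin(‖P_{N^⊥} x‖), where P_{N^⊥} is the orthogonal projection onto N^⊥. -/

import Mathlib

open scoped RealInnerProductSpace

/-- The geodesic distance from a unit vector `x` to the subsphere `S_N = Sⁿ ∩ N`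
(for a nonzero subspace `N` of `ℝ^{n+1}` with orthonormal basis `v` of `Nᗮ`)
equals `arcsin (√(Σᵢ (x ⬝ vᵢ)²)) = arcsin ‖P_{Nᗮ} x‖`. -/
theorem sphere_geodesic_dist_to_subsphere (n m : ℕ)
    (N : Submodule ℝ (EuclideanSpace ℝ (Fin (n + 1)))) (hN : N ≠ ⊥)
    (v : Fin m → EuclideanSpace ℝ (Fin (n + 1)))
    (hv : Orthonormal ℝ v)
    (hspan : Submodule.span ℝ (Set.range v) = Nᗮ)
    (x : EuclideanSpace ℝ (Fin (n + 1))) (hx : ‖x‖ = 1) :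
    sInf ((fun y => Real.arccos ⟪x, y⟫) ''
        {y : EuclideanSpace ℝ (Fin (n + 1)) | ‖y‖ = 1 ∧ y ∈ N}) =
      Real.arcsin (Real.sqrt (∑ i, (⟪x, v i⟫) ^ 2)) ∧
    Real.sqrt (∑ i, (⟪x, v i⟫) ^ 2) =
      ‖(Submodule.orthogonalProjection Nᗮ x : EuclideanSpace ℝ (Fin (n + 1)))‖ := by
  classical
  set Q : EuclideanSpace ℝ (Fin (n + 1)) := (Submodule.orthogonalProjection N x : EuclideanSpace ℝ (Fin (n + 1))) with hQdef
  set P : EuclideanSpace ℝ (Fin (n + 1)) := (Submodule.orthogonalProjection Nᗮ x : EuclideanSpace ℝ (Fin (n + 1))) with hPdef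
  have hQmem : Q ∈ N := (Submodule.orthogonalProjection N x).2
  have hPmem : P ∈ Nᗮ := (Submodule.orthogonalProjection Nᗮ x).2
  have hQP : Q + P = x := N.starProjection_add_starProjection_orthogonal x
  -- v i ∈ Nᗮ
  have hvmem : ∀ i, v i ∈ Nᗮ := fun i =>
    hspan ▸ Submodule.subset_span (Set.mem_range_self i)
  -- the projection onto Nᗮ equals the sum of inner products with v
  have hPsum : P = ∑ i, ⟪v i, x⟫ • v i := by
    apply Submodule.eq_starProjection_of_mem_of_inner_eq_zero
    · exact Submodule.sum_mem _ fun i _ => Submodule.smul_mem _ _ (hvmem i)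
    · intro w hw
      rw [← hspan] at hw
      induction hw using Submodule.span_induction with
      | mem w hw =>
        obtain ⟨j, rfl⟩ := hw
        rw [inner_sub_left, sub_eq_zero, sum_inner]
        have : ∀ i, ⟪(⟪v i, x⟫ : ℝ) • v i, v j⟫ = ⟪v i, x⟫ * ⟪v i, v j⟫ := fun i =>
          real_inner_smul_left _ _ _
        rw [Finset.sum_congr rfl fun i _ => this i]
        have horth := orthonormal_iff_ite.mp hv
        rw [Finset.sum_congr rfl fun i _ => by rw [horth i j]]
        simp [Finset.sum_ite_eq' Finset.univ j, real_inner_comm, mul_comm]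
      | zero => simp
      | add a b _ _ ha hb => rw [inner_add_right, ha, hb, add_zero]
      | smul r a _ ha => rw [real_inner_smul_right, ha, mul_zero]
  -- second claim
  have hPnormsq : ‖P‖ ^ 2 = ∑ i, (⟪x, v i⟫) ^ 2 := by
    rw [← real_inner_self_eq_norm_sq, hPsum, hv.inner_sum]
    refine Finset.sum_congr rfl fun i _ => ?_
    rw [conj_trivial, ← sq, real_inner_comm]
  have hsecond : Real.sqrt (∑ i, (⟪x, v i⟫) ^ 2) = ‖P‖ := by
    rw [← hPnormsq, Real.sqrt_sq (norm_nonneg _)]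
  refine ⟨?_, hsecond⟩
  -- Pythagoras
  have hQPinner : ⟪Q, P⟫ = 0 := Submodule.inner_right_of_mem_orthogonal hQmem hPmem
  have hpyth : ‖Q‖ ^ 2 + ‖P‖ ^ 2 = 1 := by
    have h1 := norm_add_sq_real Q P
    rw [hQP, hQPinner, hx] at h1
    nlinarith
  have hq0 : (0 : ℝ) ≤ ‖Q‖ := norm_nonneg _
  have hq1 : ‖Q‖ ≤ 1 := by nlinarith [sq_nonneg ‖P‖]
  have harc : Real.arcsin ‖P‖ = Real.arccos ‖Q‖ := by
    rw [Real.arccos_eq_arcsin hq0]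
    congr 1
    rw [show (1 : ℝ) - ‖Q‖ ^ 2 = ‖P‖ ^ 2 by linarith, Real.sqrt_sq (norm_nonneg _)]
  rw [hsecond, harc]
  -- inner with elements of N
  have hinner : ∀ y ∈ N, ⟪x, y⟫ = ⟪Q, y⟫ := by
    intro y hy
    rw [← hQP, inner_add_left, Submodule.inner_left_of_mem_orthogonal hy hPmem, add_zero]
  -- the set and its least element
  have hlb : ∀ a ∈ ((fun y => Real.arccos ⟪x, y⟫) ''
      {y : EuclideanSpace ℝ (Fin (n + 1)) | ‖y‖ = 1 ∧ y ∈ N}), Real.arccos ‖Q‖ ≤ a := by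
    rintro a ⟨y, ⟨hy1, hyN⟩, rfl⟩
    have h1 : ⟪x, y⟫ ≤ ‖Q‖ := by
      rw [hinner y hyN]
      calc ⟪Q, y⟫ ≤ ‖Q‖ * ‖y‖ := real_inner_le_norm _ _
        _ = ‖Q‖ := by rw [hy1, mul_one]
    unfold Real.arccos
    have := Real.monotone_arcsin h1
    linarith
  have hmem : Real.arccos ‖Q‖ ∈ ((fun y => Real.arccos ⟪x, y⟫) ''
      {y : EuclideanSpace ℝ (Fin (n + 1)) | ‖y‖ = 1 ∧ y ∈ N}) := by
    by_cases hQ0 : Q = 0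
    · obtain ⟨z, hzN, hz0⟩ := Submodule.exists_mem_ne_zero_of_ne_bot hN
      refine ⟨‖z‖⁻¹ • z, ⟨?_, Submodule.smul_mem _ _ hzN⟩, ?_⟩
      · rw [norm_smul, norm_inv, norm_norm, inv_mul_cancel₀ (norm_ne_zero_iff.mpr hz0)]
      · show Real.arccos ⟪x, ‖z‖⁻¹ • z⟫ = Real.arccos ‖Q‖
        rw [hinner _ (Submodule.smul_mem _ _ hzN), hQ0]
        simp
    · refine ⟨‖Q‖⁻¹ • Q, ⟨?_, Submodule.smul_mem _ _ hQmem⟩, ?_⟩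
      · rw [norm_smul, norm_inv, norm_norm, inv_mul_cancel₀ (norm_ne_zero_iff.mpr hQ0)]
      · show Real.arccos ⟪x, ‖Q‖⁻¹ • Q⟫ = Real.arccos ‖Q‖
        rw [hinner _ (Submodule.smul_mem _ _ hQmem), real_inner_smul_right,
          real_inner_self_eq_norm_sq]
        have hQn : ‖Q‖ ≠ 0 := norm_ne_zero_iff.mpr hQ0
        congr 1
        rw [sq]
        field_simp
  exact (IsLeast.csInf_eq ⟨hmem, hlb⟩)
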